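/- Let W₀, W₁, W₂ be complex Hilbert spaces with real structures, L₀₁ ⊆ W₀ ⊕ (−W₁) and L₁₂ ⊆ W₁ ⊕ (−W₂) Lagrangians. Set W = W₀ ⊕ (−W₁) ⊕ W₁ ⊕ (−W₂), L = L₀₁ ⊕ L₁₂, let σ: W → W₁ be σ(v₀, v₁, v₁', v₂) = v₁ − v₁', and K = {w ∈ W₁ : (0,w) ∈ L₀₁ ∧ (w,0) ∈ L₁₂}. Then σ(L)^⊥ = K̄, the conjugate of K in W₁. -/

import Mathlib

noncomputable section

/-- A real structure on a complex inner product space: an anti-unitary involution `v ↦ v̄`. -/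
structure RealStructure (W : Type*) [NormedAddCommGroup W] [InnerProductSpace ℂ W] where
  conj : W → W
  map_add : ∀ v w : W, conj (v + w) = conj v + conj w
  map_smul : ∀ (c : ℂ) (v : W), conj (c • v) = (starRingEnd ℂ) c • conj v
  invol : ∀ v : W, conj (conj v) = v
  inner_conj : ∀ v w : W, (inner ℂ (conj v) (conj w) : ℂ) = (starRingEnd ℂ) (inner ℂ v w : ℂ)

/-- The real structure of `A ⊕ (−B)`. -/
def pairConj {A B : Type*} [NormedAddCommGroup A] [InnerProductSpace ℂ A]
    [NormedAddCommGroup B] [InnerProductSpace ℂ B]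
    (rA : RealStructure A) (rB : RealStructure B) : A × B → A × B :=
  fun p => (rA.conj p.1, -rB.conj p.2)

/-- The Hermitian inner product of `A ⊕ B`. -/
def pairInner {A B : Type*} [NormedAddCommGroup A] [InnerProductSpace ℂ A]
    [NormedAddCommGroup B] [InnerProductSpace ℂ B] (x y : A × B) : ℂ :=
  (inner ℂ x.1 y.1 : ℂ) + (inner ℂ x.2 y.2 : ℂ)

/-- A Lagrangian `L ⊆ A ⊕ (−B)`. -/
def IsLagrangianPair {A B : Type*} [NormedAddCommGroup A] [InnerProductSpace ℂ A]
    [NormedAddCommGroup B] [InnerProductSpace ℂ B]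
    (rA : RealStructure A) (rB : RealStructure B) (L : Submodule ℂ (A × B)) : Prop :=
  pairConj rA rB '' (L : Set (A × B)) = {y : A × B | ∀ x ∈ L, pairInner x y = 0}


lemma RealStructure.conj_zero {W : Type*} [NormedAddCommGroup W] [InnerProductSpace ℂ W]
    (r : RealStructure W) : r.conj 0 = 0 := by
  have := r.map_smul 0 0
  simpa using this

lemma RealStructure.conj_neg {W : Type*} [NormedAddCommGroup W] [InnerProductSpace ℂ W]
    (r : RealStructure W) (v : W) : r.conj (-v) = -r.conj v := by
  have := r.map_smul (-1) v
  simpa using this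

/-- With `L = L₀₁ ⊕ L₁₂` and `σ(v₀,v₁,v₁',v₂) = v₁ − v₁'`, the orthogonal complement
(in `W₁`) of the image `σ(L)` equals `K̄`, the conjugate of the space
`K = {w ∈ W₁ : (0,w) ∈ L₀₁ ∧ (w,0) ∈ L₁₂}`. -/
theorem orthogonal_of_sigma_image_eq_conj_K
    {W₀ W₁ W₂ : Type*}
    [NormedAddCommGroup W₀] [InnerProductSpace ℂ W₀] [CompleteSpace W₀]
    [NormedAddCommGroup W₁] [InnerProductSpace ℂ W₁] [CompleteSpace W₁]
    [NormedAddCommGroup W₂] [InnerProductSpace ℂ W₂] [CompleteSpace W₂]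
    (r₀ : RealStructure W₀) (r₁ : RealStructure W₁) (r₂ : RealStructure W₂)
    (L01 : Submodule ℂ (W₀ × W₁)) (L12 : Submodule ℂ (W₁ × W₂))
    (h01 : IsLagrangianPair r₀ r₁ L01) (h12 : IsLagrangianPair r₁ r₂ L12) :
    {u : W₁ | ∀ x ∈ L01, ∀ y ∈ L12, (inner ℂ (x.2 - y.1) u : ℂ) = 0} =
      r₁.conj '' {w : W₁ | (0, w) ∈ L01 ∧ (w, 0) ∈ L12} := by
  ext u
  simp only [Set.mem_setOf_eq, Set.mem_image]
  constructor
  · intro h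
    have h1 : ∀ x ∈ L01, (inner ℂ x.2 u : ℂ) = 0 := fun x hx => by
      have := h x hx 0 L12.zero_mem; simpa using this
    have h2 : ∀ y ∈ L12, (inner ℂ y.1 u : ℂ) = 0 := fun y hy => by
      have := h 0 L01.zero_mem y hy; simpa [inner_sub_left] using this
    have m1 : ((0 : W₀), -u) ∈ pairConj r₀ r₁ '' (L01 : Set (W₀ × W₁)) := by
      rw [h01]
      intro x hx
      simp [pairInner, h1 x hx, inner_neg_right]
    have m2 : ((-u : W₁), (0 : W₂)) ∈ pairConj r₁ r₂ '' (L12 : Set (W₁ × W₂)) := by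
      rw [h12]
      intro y hy
      simp [pairInner, h2 y hy, inner_neg_right]
    obtain ⟨⟨a, b⟩, hab, heq⟩ := m1
    obtain ⟨⟨c, d⟩, hcd, heq'⟩ := m2
    simp only [pairConj, Prod.mk.injEq] at heq heq'
    have ha : a = 0 := by
      have := congrArg r₀.conj heq.1
      rwa [r₀.invol, r₀.conj_zero] at this
    have hb : b = r₁.conj u := by
      have h3 : r₁.conj b = u := by
        have := heq.2
        have : r₁.conj b = u := by
          have := neg_injective this
          exact this
        exact this
      have := congrArg r₁.conj h3
      rwa [r₁.invol] at this
    have hd : d = 0 := by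
      have := heq'.2
      have h4 : r₂.conj d = 0 := by simpa [neg_eq_zero] using this
      have := congrArg r₂.conj h4
      rwa [r₂.invol, r₂.conj_zero] at this
    have hc : c = -r₁.conj u := by
      have := congrArg r₁.conj heq'.1
      rwa [r₁.invol, r₁.conj_neg] at this
    refine ⟨r₁.conj u, ⟨?_, ?_⟩, r₁.invol u⟩
    · rw [← ha, ← hb]; exact hab
    · have : -((c, d) : W₁ × W₂) ∈ L12 := L12.neg_mem hcd
      simpa [hc, hd] using this
  · rintro ⟨w, ⟨hw1, hw2⟩, rfl⟩
    intro x hx y hy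
    have e1 : pairConj r₀ r₁ (0, w) ∈ pairConj r₀ r₁ '' (L01 : Set (W₀ × W₁)) :=
      Set.mem_image_of_mem _ hw1
    have e2 : pairConj r₁ r₂ (w, 0) ∈ pairConj r₁ r₂ '' (L12 : Set (W₁ × W₂)) :=
      Set.mem_image_of_mem _ hw2
    rw [h01] at e1
    rw [h12] at e2
    have f1 := e1 x hx
    have f2 := e2 y hy
    simp only [pairConj, pairInner, r₀.conj_zero, r₂.conj_zero, neg_zero,
      inner_zero_right, inner_neg_right, zero_add, add_zero] at f1 f2
    rw [inner_sub_left]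
    have g1 : (inner ℂ x.2 (r₁.conj w) : ℂ) = 0 := by
      have := f1; linear_combination -this
    rw [g1, f2, sub_zero]
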